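/- Let 𝓗 be a finite set of subgroups of a finite group G. For the pretty good measurement M_H = Σ^{-1/2} P_H^{⊗k} Σ^{-1/2} where P_H is the projection onto the support of ρ_H and Σ = Σ_{H'∈𝓗} P_{H'}^{⊗k}, the error probability on input ρ_H^{⊗k} satisfies tr((I − M_H) ρ_H^{⊗k}) ≤ 4 Σ_{H'≠H} (|H∩H'|/|H'|)^k. -/

import Mathlib

noncomputable section

open scoped BigOperators ComplexOrder

open Classical in
/-- The coset state `ρ_H = (1/|G|) ∑_g |gH⟩⟨gH|`; its `(x, y)` entry is
`1/|G|` if `x⁻¹ y ∈ H` and `0` otherwise. -/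
def cosetState {G : Type*} [Group G] [Fintype G] (H : Subgroup G) : Matrix G G ℂ :=
  fun x y => if x⁻¹ * y ∈ H then (1 : ℂ) / (Fintype.card G) else 0

/-- `k`-fold tensor power of a matrix. -/
def tensorPow {n : Type*} [Fintype n] (M : Matrix n n ℂ) (k : ℕ) :
    Matrix (Fin k → n) (Fin k → n) ℂ :=
  fun x y => ∏ i, M (x i) (y i)

/-- Trace norm `‖Y‖₁ = tr √(Yᴴ Y)`. -/
def traceNorm {n : Type*} [Fintype n] [DecidableEq n] (Y : Matrix n n ℂ) : ℝ :=
  (((Matrix.posSemidef_conjTranspose_mul_self Y).1.eigenvectorUnitary.1 *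
      Matrix.diagonal (fun i => ((Real.sqrt
        ((Matrix.posSemidef_conjTranspose_mul_self Y).1.eigenvalues i) : ℝ) : ℂ)) *
      (star (Matrix.posSemidef_conjTranspose_mul_self Y).1.eigenvectorUnitary :
        Matrix n n ℂ)).trace).re

/-- Operator (spectral) norm of a matrix. -/
def opNorm {n : Type*} [Fintype n] [DecidableEq n] (M : Matrix n n ℂ) : ℝ :=
  ‖Matrix.toEuclideanCLM (𝕜 := ℂ) M‖

/-- Square root of the Moore–Penrose pseudoinverse of a Hermitian matrix
(junk value `0` on non-Hermitian input). -/
def pinvSqrt {n : Type*} [Fintype n] [DecidableEq n] (A : Matrix n n ℂ) : Matrix n n ℂ :=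
  if h : A.IsHermitian then
    h.eigenvectorUnitary.1 *
      Matrix.diagonal (fun i => ((Real.sqrt (h.eigenvalues i))⁻¹ : ℂ)) *
      (star h.eigenvectorUnitary : Matrix n n ℂ)
  else 0

section PGMAux
set_option linter.unusedSectionVars false
open Matrix
variable {m : Type*} [Fintype m] [DecidableEq m]

lemma psd_trace_re_nonneg {A : Matrix m m ℂ} (hA : A.PosSemidef) : 0 ≤ A.trace.re := by
  have h : ∀ i, 0 ≤ (A i i).re := by
    intro i
    have h2 := hA.re_dotProduct_nonneg (Pi.single i 1)
    simpa [dotProduct, Matrix.mulVec, Pi.single_apply, Finset.sum_ite_eq,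
      Finset.sum_ite_eq'] using h2
  rw [Matrix.trace, Complex.re_sum]
  exact Finset.sum_nonneg fun i _ => h i

open scoped MatrixOrder in
lemma psd_trace_mul_re_nonneg {A B : Matrix m m ℂ} (hA : A.PosSemidef) (hB : B.PosSemidef) :
    0 ≤ (A * B).trace.re := by
  have hB0 : (0 : Matrix m m ℂ) ≤ B := Matrix.nonneg_iff_posSemidef.mpr hB
  set sB := CFC.sqrt B with hsB
  have hs : sB * sB = B := CFC.sqrt_mul_sqrt_self B hB0
  have h1 : (A * (sB * sB)).trace = (sB * A * sB).trace := by
    rw [← Matrix.mul_assoc, Matrix.trace_mul_comm (A * sB) sB, ← Matrix.mul_assoc]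
  rw [hs] at h1
  rw [h1]
  have hherm : sB.conjTranspose = sB :=
    (Matrix.nonneg_iff_posSemidef.mp (CFC.sqrt_nonneg B)).isHermitian
  have hpsd : (sB * A * sB).PosSemidef := by
    conv => enter [1,1,1]; rw [← hherm]
    exact hA.conjTranspose_mul_mul_same _
  exact psd_trace_re_nonneg hpsd

lemma trace_conjT_mul_eq (A B : Matrix m m ℂ) :
    (Aᴴ * B).trace = ∑ j : m, ∑ i : m, (starRingEnd ℂ) (A i j) * B i j := by
  simp [Matrix.trace, Matrix.diag, Matrix.mul_apply, Matrix.conjTranspose_apply]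

lemma trace_conjT_mul_self_re (A : Matrix m m ℂ) :
    (Aᴴ * A).trace.re = ∑ j : m, ∑ i : m, ‖A i j‖ ^ 2 := by
  rw [trace_conjT_mul_eq, Complex.re_sum]
  refine Finset.sum_congr rfl fun j _ => ?_
  rw [Complex.re_sum]
  refine Finset.sum_congr rfl fun i _ => ?_
  rw [Complex.conj_mul', ← Complex.ofReal_pow, Complex.ofReal_re]

lemma frobenius_cs (A B : Matrix m m ℂ) :
    ((Aᴴ * B).trace.re) ^ 2 ≤ (Aᴴ * A).trace.re * (Bᴴ * B).trace.re := by
  have habs : |(Aᴴ * B).trace.re| ≤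
      ∑ j : m, ∑ i : m, ‖A i j‖ * ‖B i j‖ := by
    refine (Complex.abs_re_le_norm _).trans ?_
    rw [trace_conjT_mul_eq]
    refine (norm_sum_le _ _).trans ?_
    refine Finset.sum_le_sum fun j _ => ?_
    refine (norm_sum_le _ _).trans ?_
    refine Finset.sum_le_sum fun i _ => ?_
    simp [_root_.map_mul]
  have hcs := Finset.sum_mul_sq_le_sq_mul_sq (Finset.univ : Finset (m × m))
      (fun p => ‖A p.2 p.1‖) (fun p => ‖B p.2 p.1‖)
  rw [← Fintype.sum_prod_type'] at habs
  have h2 : (Aᴴ * A).trace.re = ∑ p : m × m, ‖A p.2 p.1‖ ^ 2 := by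
    rw [trace_conjT_mul_self_re, ← Fintype.sum_prod_type']
  have h3 : (Bᴴ * B).trace.re = ∑ p : m × m, ‖B p.2 p.1‖ ^ 2 := by
    rw [trace_conjT_mul_self_re, ← Fintype.sum_prod_type']
  have h0 : (0:ℝ) ≤ ∑ p : m × m, ‖A p.2 p.1‖ * ‖B p.2 p.1‖ :=
    Finset.sum_nonneg fun p _ => mul_nonneg (norm_nonneg _) (norm_nonneg _)
  have h4 : ((Aᴴ * B).trace.re) ^ 2 ≤
      (∑ p : m × m, ‖A p.2 p.1‖ * ‖B p.2 p.1‖) ^ 2 := by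
    have hle := (abs_le.mp habs)
    nlinarith [hle.1, hle.2]
  rw [h2, h3]
  exact h4.trans hcs

lemma tensorPow_mul (A B : Matrix m m ℂ) (k : ℕ) :
    tensorPow (A * B) k = tensorPow A k * tensorPow B k := by
  ext x y
  simp only [tensorPow, Matrix.mul_apply]
  rw [Finset.prod_univ_sum, Fintype.piFinset_univ]
  exact Finset.sum_congr rfl fun z _ => Finset.prod_mul_distrib

lemma tensorPow_trace (A : Matrix m m ℂ) (k : ℕ) :
    (tensorPow A k).trace = A.trace ^ k := by
  have h : A.trace ^ k = ∏ _i : Fin k, A.trace := by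
    rw [Finset.prod_const, Finset.card_univ, Fintype.card_fin]
  rw [h]
  simp only [Matrix.trace, Matrix.diag, tensorPow]
  rw [Finset.prod_univ_sum, Fintype.piFinset_univ]

lemma tensorPow_conjT (A : Matrix m m ℂ) (k : ℕ) :
    (tensorPow A k)ᴴ = tensorPow Aᴴ k := by
  ext x y
  simp only [tensorPow, Matrix.conjTranspose_apply]
  exact map_prod (starRingEnd ℂ) _ _

lemma tensorPow_smul (a : ℂ) (A : Matrix m m ℂ) (k : ℕ) :
    tensorPow (a • A) k = a ^ k • tensorPow A k := by
  ext x y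
  simp only [tensorPow, Matrix.smul_apply, smul_eq_mul, Finset.prod_mul_distrib,
    Finset.prod_const, Finset.card_univ, Fintype.card_fin]

lemma tensorPow_posSemidef {A : Matrix m m ℂ} (h1 : Aᴴ = A) (h2 : A * A = A) (k : ℕ) :
    (tensorPow A k).PosSemidef := by
  have hh : (tensorPow A k)ᴴ = tensorPow A k := by rw [tensorPow_conjT, h1]
  have hi : tensorPow A k * tensorPow A k = tensorPow A k := by
    rw [← tensorPow_mul, h2]
  have h3 : tensorPow A k = (tensorPow A k)ᴴ * tensorPow A k := by rw [hh, hi]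
  rw [h3]
  exact Matrix.posSemidef_conjTranspose_mul_self _

end PGMAux

section GroupAux
set_option linter.unusedSectionVars false
open Matrix
variable {G : Type*} [Group G] [Fintype G] [DecidableEq G]

open Classical in
lemma card_coset_filter (x : G) (K : Subgroup G) :
    (Finset.univ.filter fun z : G => x⁻¹ * z ∈ K).card = Nat.card ↥K := by
  rw [Nat.card_eq_fintype_card, ← Fintype.card_subtype]
  exact Fintype.card_congr (Equiv.subtypeEquiv (Equiv.mulLeft x⁻¹) (fun z => Iff.rfl))

open Classical in
lemma sum_indicator_pair (x : G) (K L : Subgroup G) (a b : ℂ) :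
    ∑ y : G, (if x⁻¹ * y ∈ K then a else 0) * (if x⁻¹ * y ∈ L then b else 0)
      = (Nat.card ↥(K ⊓ L) : ℂ) * (a * b) := by
  have h1 : ∀ y : G, (if x⁻¹ * y ∈ K then a else 0) * (if x⁻¹ * y ∈ L then b else 0)
      = if x⁻¹ * y ∈ K ⊓ L then a * b else 0 := by
    intro y
    by_cases hK : x⁻¹ * y ∈ K <;> by_cases hL : x⁻¹ * y ∈ L <;>
      simp [hK, hL, Subgroup.mem_inf]
  rw [Finset.sum_congr rfl (fun y _ => h1 y), ← Finset.sum_filter, Finset.sum_const,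
    card_coset_filter x (K ⊓ L), nsmul_eq_mul]

lemma inv_mem_swap (L : Subgroup G) (x y : G) : (y⁻¹ * x ∈ L) ↔ (x⁻¹ * y ∈ L) := by
  rw [← L.inv_mem_iff, _root_.mul_inv_rev, inv_inv]

lemma cosetState_trace (K : Subgroup G) : (cosetState K).trace = 1 := by
  classical
  have hG : (Fintype.card G : ℂ) ≠ 0 := by
    simp [Fintype.card_ne_zero]
  simp only [Matrix.trace, Matrix.diag, cosetState, inv_mul_cancel, one_mem, if_true]
  rw [Finset.sum_const, Finset.card_univ, nsmul_eq_mul]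
  field_simp

lemma cosetState_conjT (K : Subgroup G) : (cosetState K)ᴴ = cosetState K := by
  ext x y
  classical
  simp only [Matrix.conjTranspose_apply, cosetState, inv_mem_swap K x y]
  by_cases h : x⁻¹ * y ∈ K <;> simp [h, inv_mem_swap]

lemma trace_cosetState_mul (K L : Subgroup G) :
    (cosetState K * cosetState L).trace
      = (Nat.card ↥(K ⊓ L) : ℂ) / (Fintype.card G : ℂ) := by
  classical
  have hG : (Fintype.card G : ℂ) ≠ 0 := by simp [Fintype.card_ne_zero]
  simp only [Matrix.trace, Matrix.diag, Matrix.mul_apply, cosetState]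
  have h1 : ∀ x : G, ∑ y : G,
      (if x⁻¹ * y ∈ K then (1:ℂ)/(Fintype.card G) else 0) *
      (if y⁻¹ * x ∈ L then (1:ℂ)/(Fintype.card G) else 0)
      = (Nat.card ↥(K ⊓ L) : ℂ) * ((1:ℂ)/(Fintype.card G) * (1/(Fintype.card G))) := by
    intro x
    rw [← sum_indicator_pair x K L]
    refine Finset.sum_congr rfl fun y _ => ?_
    rw [inv_mem_swap L x y]
  rw [Finset.sum_congr rfl (fun x _ => h1 x), Finset.sum_const, Finset.card_univ, nsmul_eq_mul]
  field_simp

lemma cosetState_mul_self (K : Subgroup G) :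
    cosetState K * cosetState K
      = ((Nat.card ↥K : ℂ) / (Fintype.card G : ℂ)) • cosetState K := by
  classical
  ext x y
  simp only [Matrix.mul_apply, cosetState, Matrix.smul_apply, smul_eq_mul]
  by_cases hxy : x⁻¹ * y ∈ K
  · have h1 : ∀ z : G,
        (if x⁻¹ * z ∈ K then (1:ℂ)/(Fintype.card G) else 0) *
        (if z⁻¹ * y ∈ K then (1:ℂ)/(Fintype.card G) else 0)
        = if x⁻¹ * z ∈ K then (1:ℂ)/(Fintype.card G) * (1/(Fintype.card G)) else 0 := by
      intro z
      by_cases hz : x⁻¹ * z ∈ K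
      · have hz2 : z⁻¹ * y ∈ K := by
          have := K.mul_mem (K.inv_mem hz) hxy
          simpa [mul_assoc, _root_.mul_inv_rev] using this
        simp [hz, hz2]
      · simp [hz]
    rw [Finset.sum_congr rfl (fun z _ => h1 z), ← Finset.sum_filter, Finset.sum_const,
      card_coset_filter x K, nsmul_eq_mul, if_pos hxy]
    ring
  · have h1 : ∀ z : G,
        (if x⁻¹ * z ∈ K then (1:ℂ)/(Fintype.card G) else 0) *
        (if z⁻¹ * y ∈ K then (1:ℂ)/(Fintype.card G) else 0) = 0 := by
      intro z
      by_cases hz : x⁻¹ * z ∈ K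
      · have hz2 : z⁻¹ * y ∉ K := by
          intro hzy
          exact hxy (by simpa [mul_assoc] using K.mul_mem hz hzy)
        simp [hz, hz2]
      · simp [hz]
    rw [Finset.sum_congr rfl (fun z _ => h1 z)]
    simp [hxy]

end GroupAux


set_option maxHeartbeats 1600000

open Matrix

open Classical in
/-- Error bound for the pretty good measurement on k copies of coset states. -/
theorem pgm_error_bound {G : Type*} [Group G] [Fintype G] [DecidableEq G]
    (𝓗 : Finset (Subgroup G)) (k : ℕ) (H : Subgroup G) (hH : H ∈ 𝓗)
    (P : Subgroup G → Matrix G G ℂ)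
    (hPdef : ∀ K : Subgroup G, P K = ((Fintype.card G : ℂ) / (Nat.card ↥K : ℂ)) • cosetState K)
    (Sig : Matrix (Fin k → G) (Fin k → G) ℂ)
    (hSig : Sig = ∑ K ∈ 𝓗, tensorPow (P K) k) :
    ((((1 : Matrix (Fin k → G) (Fin k → G) ℂ) -
        pinvSqrt Sig * tensorPow (P H) k * pinvSqrt Sig) *
      tensorPow (cosetState H) k).trace).re ≤
      4 * ∑ H' ∈ 𝓗.erase H, ((Nat.card ↥(H ⊓ H') : ℝ) / (Nat.card ↥H' : ℝ)) ^ k := by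
  have hNpos : 0 < (Fintype.card G) := Fintype.card_pos
  have hNne : (Fintype.card G : ℂ) ≠ 0 := by
    exact_mod_cast Nat.cast_ne_zero.mpr hNpos.ne'
  have hNneR : (Fintype.card G : ℝ) ≠ 0 := by exact_mod_cast hNpos.ne'
  have hcardpos : ∀ K : Subgroup G, 0 < (Nat.card ↥K) := fun K => Nat.card_pos
  have hcardne : ∀ K : Subgroup G, (Nat.card ↥K : ℂ) ≠ 0 := fun K => by
    exact_mod_cast Nat.cast_ne_zero.mpr (hcardpos K).ne'
  have hcardneR : ∀ K : Subgroup G, (Nat.card ↥K : ℝ) ≠ 0 := fun K => by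
    exact_mod_cast (hcardpos K).ne'
  -- basic facts about the projections P K
  have hPherm : ∀ K : Subgroup G, (P K)ᴴ = P K := by
    intro K
    rw [hPdef, Matrix.conjTranspose_smul, cosetState_conjT]
    congr 1
    simp [star_div₀]
  have hPidem : ∀ K : Subgroup G, P K * P K = P K := by
    intro K
    rw [hPdef K, Matrix.smul_mul, Matrix.mul_smul, cosetState_mul_self, smul_smul, smul_smul]
    congr 1
    field_simp
  set S : Matrix (Fin k → G) (Fin k → G) ℂ := tensorPow (P H) k with hSdef
  set T : Matrix (Fin k → G) (Fin k → G) ℂ := ∑ K ∈ 𝓗.erase H, tensorPow (P K) k with hTdef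
  have hSherm : Sᴴ = S := by rw [hSdef, tensorPow_conjT, hPherm]
  have hSidem : S * S = S := by rw [hSdef, ← tensorPow_mul, hPidem]
  have hSpsd : S.PosSemidef := tensorPow_posSemidef (hPherm H) (hPidem H) k
  have hTpsd : T.PosSemidef := by
    rw [hTdef]
    refine Finset.sum_induction _ _ (fun a b ha hb => ha.add hb) Matrix.PosSemidef.zero ?_
    intro K _
    exact tensorPow_posSemidef (hPherm K) (hPidem K) k
  have hSplit : Sig = S + T := by
    rw [hSig, hSdef, hTdef, ← Finset.add_sum_erase 𝓗 _ hH]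
  have hSigpsd : Sig.PosSemidef := by rw [hSplit]; exact hSpsd.add hTpsd
  have hherm : Sig.IsHermitian := hSigpsd.isHermitian
  -- spectral machinery
  set u : Matrix (Fin k → G) (Fin k → G) ℂ := (hherm.eigenvectorUnitary : Matrix (Fin k → G) (Fin k → G) ℂ) with hu
  set ev : (Fin k → G) → ℝ := hherm.eigenvalues with hevdef
  have hu2 : u * star u = 1 := Matrix.mem_unitaryGroup_iff.mp hherm.eigenvectorUnitary.2
  have hu1 : star u * u = 1 := Matrix.mem_unitaryGroup_iff'.mp hherm.eigenvectorUnitary.2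
  set D : ((Fin k → G) → ℝ) → Matrix (Fin k → G) (Fin k → G) ℂ :=
    fun phi => u * Matrix.diagonal (fun i => ((phi i : ℝ) : ℂ)) * star u with hD
  have hDmul : ∀ phi psi, D phi * D psi = D (fun i => phi i * psi i) := by
    intro phi psi
    simp only [hD, Matrix.mul_assoc]
    rw [← Matrix.mul_assoc (star u) u, hu1, Matrix.one_mul,
      ← Matrix.mul_assoc (Matrix.diagonal _) (Matrix.diagonal _), Matrix.diagonal_mul_diagonal]
    push_cast
    rfl
  have hDadd : ∀ phi psi, D phi + D psi = D (fun i => phi i + psi i) := by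
    intro phi psi
    simp only [hD]
    rw [← Matrix.add_mul, ← Matrix.mul_add, Matrix.diagonal_add]
    push_cast
    rfl
  have hDsmul : ∀ (a : ℝ) phi, ((a : ℝ) : ℂ) • D phi = D (fun i => a * phi i) := by
    intro a phi
    simp only [hD]
    rw [← Matrix.smul_mul, ← Matrix.mul_smul, ← Matrix.diagonal_smul]
    push_cast
    rfl
  have hDpsd : ∀ phi, (∀ i, 0 ≤ phi i) → (D phi).PosSemidef := by
    intro phi hphi
    have hdiag : (Matrix.diagonal (fun i => ((phi i : ℝ) : ℂ))).PosSemidef :=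
      Matrix.posSemidef_diagonal_iff.mpr fun i => Complex.zero_le_real.mpr (hphi i)
    have h5 := hdiag.mul_mul_conjTranspose_same u
    show ((u * Matrix.diagonal (fun i => ((phi i : ℝ) : ℂ))) * star u).PosSemidef
    rwa [Matrix.star_eq_conjTranspose]
  have hDone : D (fun _ => 1) = 1 := by
    simp only [hD, Complex.ofReal_one, Matrix.diagonal_one, Matrix.mul_one]
    exact hu2
  have hSigD : Sig = D ev := by
    have h6 := hherm.spectral_theorem
    rw [h6]
    rfl
  have hRD : pinvSqrt Sig = D (fun i => (Real.sqrt (ev i))⁻¹) := by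
    rw [pinvSqrt, dif_pos hherm]
    simp only [hD, Complex.ofReal_inv]
    rfl
  set R : Matrix (Fin k → G) (Fin k → G) ℂ := pinvSqrt Sig with hRdef
  set phiPi : (Fin k → G) → ℝ := fun i => if ev i = 0 then 0 else 1 with hphiPi
  set phig : (Fin k → G) → ℝ :=
    fun i => (Real.sqrt (ev i))⁻¹ + ev i / 2 - (3/2) * phiPi i with hphig
  have hevnn : ∀ i, 0 ≤ ev i := fun i => hSigpsd.eigenvalues_nonneg i
  have hphignn : ∀ i, 0 ≤ phig i := by
    intro i
    by_cases h0 : ev i = 0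
    · simp [hphig, hphiPi, h0]
    · have hlt : 0 < ev i := lt_of_le_of_ne (hevnn i) (Ne.symm h0)
      have hs : 0 < Real.sqrt (ev i) := Real.sqrt_pos.mpr hlt
      have hev2 : Real.sqrt (ev i) ^ 2 = ev i := Real.sq_sqrt (hevnn i)
      simp only [hphig, hphiPi, if_neg h0]
      set s := Real.sqrt (ev i) with hsdef
      rw [← hev2]
      have key : s⁻¹ + s ^ 2 / 2 - 3/2 * 1 = (s - 1) ^ 2 * (s + 2) / (2 * s) := by
        field_simp
        ring
      rw [key]
      exact div_nonneg (mul_nonneg (sq_nonneg _) (by linarith)) (by linarith)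
  have hRpsd : R.PosSemidef := by
    rw [hRD]
    exact hDpsd _ fun i => inv_nonneg.mpr (Real.sqrt_nonneg _)
  have hRherm : Rᴴ = R := hRpsd.isHermitian
  set Pi2 : Matrix (Fin k → G) (Fin k → G) ℂ := D (fun i => 1 - phiPi i) with hPi2
  have hPiadd : D phiPi + Pi2 = 1 := by
    rw [hPi2, hDadd]
    have hfun1 : (fun i => phiPi i + (1 - phiPi i)) = fun _ => (1:ℝ) := funext fun i => by ring
    exact (congrArg D hfun1).trans hDone
  have hPi2idem : Pi2 * Pi2 = Pi2 := by
    rw [hPi2, hDmul]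
    have hfun2 : (fun i => (1 - phiPi i) * (1 - phiPi i)) = fun i => 1 - phiPi i :=
      funext fun i => by by_cases h : ev i = 0 <;> simp [hphiPi, h]
    exact congrArg D hfun2
  have hPi2psd : Pi2.PosSemidef := by
    refine hDpsd _ fun i => ?_
    by_cases h : ev i = 0 <;> simp [hphiPi, h]
  have hPi2herm : Pi2ᴴ = Pi2 := hPi2psd.isHermitian
  have hD0 : D (fun _ => (0:ℝ)) = 0 := by
    simp only [hD, Complex.ofReal_zero, Matrix.diagonal_zero, Matrix.mul_zero, Matrix.zero_mul]
  have hsandwich0 : Pi2 * Sig * Pi2 = 0 := by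
    rw [hSigD, hPi2, hDmul, hDmul]
    have hfun0 : (fun i => (1 - phiPi i) * ev i * (1 - phiPi i)) = fun _ => (0:ℝ) :=
      funext fun i => by by_cases h : ev i = 0 <;> simp [hphiPi, h]
    exact (congrArg D hfun0).trans hD0
  -- real quantities
  set dd : ℝ := S.trace.re with hdd
  set y : ℝ := (R * S).trace.re with hy
  set x : ℝ := ((R * S * R) * S).trace.re with hx
  set t' : ℝ := (T * S).trace.re with ht'
  have ht'nn : 0 ≤ t' := psd_trace_mul_re_nonneg hTpsd hSpsd
  -- the tangent-line trace inequality : dd - y ≤ t'/2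
  have hWpsd : (D phig).PosSemidef := hDpsd _ hphignn
  have hWe : D phig + (((3:ℝ)/2 : ℝ) : ℂ) • (D phiPi) = R + (((2:ℝ)⁻¹ : ℝ) : ℂ) • Sig := by
    rw [hRD, hSigD, hDsmul, hDsmul, hDadd, hDadd]
    refine congrArg D (funext fun i => ?_)
    simp only [hphig]
    ring
  have hPiS : (D phiPi * S).trace.re = dd := by
    have hPieq : D phiPi = 1 - Pi2 := by
      rw [← hPiadd]; abel
    have e1 : (Pi2 * S * Pi2).trace = (Pi2 * S).trace := by
      calc (Pi2 * S * Pi2).trace = (Pi2 * (Pi2 * S)).trace := Matrix.trace_mul_comm _ _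
        _ = ((Pi2 * Pi2) * S).trace := by rw [Matrix.mul_assoc Pi2 Pi2 S]
        _ = (Pi2 * S).trace := by rw [hPi2idem]
    have hX1 : (Pi2 * S * Pi2).PosSemidef := by
      have := hSpsd.conjTranspose_mul_mul_same Pi2
      rwa [hPi2herm] at this
    have hX2 : (Pi2 * T * Pi2).PosSemidef := by
      have := hTpsd.conjTranspose_mul_mul_same Pi2
      rwa [hPi2herm] at this
    have hsum0 : Pi2 * S * Pi2 + Pi2 * T * Pi2 = 0 := by
      have h' : Pi2 * S * Pi2 + Pi2 * T * Pi2 = Pi2 * Sig * Pi2 := by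
        rw [hSplit, Matrix.mul_add, Matrix.add_mul]
      rw [h', hsandwich0]
    have hre1 : 0 ≤ (Pi2 * S * Pi2).trace.re := psd_trace_re_nonneg hX1
    have hre2 : 0 ≤ (Pi2 * T * Pi2).trace.re := psd_trace_re_nonneg hX2
    have hre0 : (Pi2 * S * Pi2).trace.re + (Pi2 * T * Pi2).trace.re = 0 := by
      have := congrArg (fun M : Matrix (Fin k → G) (Fin k → G) ℂ => M.trace.re) hsum0
      simpa [Matrix.trace_add, Complex.add_re] using this
    have hzero : (Pi2 * S).trace.re = 0 := by
      rw [← e1]; linarith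
    rw [hPieq, Matrix.sub_mul, Matrix.one_mul, Matrix.trace_sub, Complex.sub_re, hzero, hdd]
    ring
  have hSigS : (Sig * S).trace = S.trace + (T * S).trace := by
    rw [hSplit, Matrix.add_mul, Matrix.trace_add, hSidem]
  have htangent : dd - y ≤ t' / 2 := by
    have h0 : 0 ≤ (D phig * S).trace.re := psd_trace_mul_re_nonneg hWpsd hSpsd
    have h1 := congrArg (fun M : Matrix (Fin k → G) (Fin k → G) ℂ => (M * S).trace.re) hWe
    simp only [Matrix.add_mul, Matrix.smul_mul, Matrix.trace_add, Matrix.trace_smul,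
      Complex.add_re, smul_eq_mul, Complex.re_ofReal_mul] at h1
    rw [hPiS] at h1
    have h2 : (Sig * S).trace.re = dd + t' := by
      rw [hSigS, Complex.add_re, hdd, ht']
    rw [h2] at h1
    rw [← hy] at h1
    linarith
  -- Cauchy-Schwarz : y^2 ≤ dd * x
  have hSY : S * (S * R * S) = S * R * S := by
    rw [← Matrix.mul_assoc S (S * R) S, ← Matrix.mul_assoc S S R, hSidem]
  have hyx : y ^ 2 ≤ dd * x := by
    have hcs := frobenius_cs S (S * R * S)
    have hq1 : (Sᴴ * (S * R * S)).trace = (R * S).trace := by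
      rw [hSherm, hSY]
      calc ((S * R) * S).trace = (S * (S * R)).trace := Matrix.trace_mul_comm _ _
        _ = ((S * S) * R).trace := by rw [Matrix.mul_assoc S S R]
        _ = (S * R).trace := by rw [hSidem]
        _ = (R * S).trace := Matrix.trace_mul_comm _ _
    have hYherm : (S * R * S)ᴴ = S * R * S := by
      rw [Matrix.conjTranspose_mul, Matrix.conjTranspose_mul, hSherm, hRherm]
      rw [Matrix.mul_assoc S R S]
    have hq3 : ((S * R * S)ᴴ * (S * R * S)).trace = ((R * S * R) * S).trace := by
      rw [hYherm]
      have e2 : (S * R * S) * (S * R * S) = (S * R) * ((S * R) * S) := by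
        rw [Matrix.mul_assoc (S * R) S (S * R * S), hSY]
      rw [e2]
      calc ((S * R) * ((S * R) * S)).trace
          = (((S * R) * S) * (S * R)).trace := Matrix.trace_mul_comm _ _
        _ = ((S * R) * (S * (S * R))).trace := by rw [Matrix.mul_assoc (S * R) S (S * R)]
        _ = ((S * R) * ((S * S) * R)).trace := by rw [Matrix.mul_assoc S S R]
        _ = ((S * R) * (S * R)).trace := by rw [hSidem]
        _ = ((R * S * R) * S).trace := ?_
      calc ((S * R) * (S * R)).trace = (((S * R) * S) * R).trace := by
            rw [Matrix.mul_assoc (S * R) S R]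
        _ = (R * ((S * R) * S)).trace := Matrix.trace_mul_comm _ _
        _ = ((R * (S * R)) * S).trace := by rw [Matrix.mul_assoc R (S * R) S]
        _ = ((R * S * R) * S).trace := by rw [← Matrix.mul_assoc R S R]
    have hq2 : (Sᴴ * S).trace = S.trace := by rw [hSherm, hSidem]
    rw [hq1, hq2, hq3] at hcs
    rw [hy, hdd, hx]
    exact hcs
  -- trace of S and the scalar e
  have htrP : (P H).trace = (Fintype.card G : ℂ) / (Nat.card ↥H : ℂ) := by
    rw [hPdef, Matrix.trace_smul, cosetState_trace, smul_eq_mul, mul_one]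
  have htrS : S.trace = ((((Fintype.card G : ℝ) / (Nat.card ↥H : ℝ)) ^ k : ℝ) : ℂ) := by
    rw [hSdef, tensorPow_trace, htrP]
    push_cast
    ring
  have hddval : dd = ((Fintype.card G : ℝ) / (Nat.card ↥H : ℝ)) ^ k := by
    rw [hdd, htrS, Complex.ofReal_re]
  set e : ℝ := ((Nat.card ↥H : ℝ) / (Fintype.card G : ℝ)) ^ k with he
  have hepos : 0 < e := by
    rw [he]
    have : 0 < (Nat.card ↥H : ℝ) / (Fintype.card G : ℝ) := by
      apply div_pos
      · exact_mod_cast hcardpos H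
      · exact_mod_cast hNpos
    positivity
  have hedd : e * dd = 1 := by
    rw [he, hddval, ← mul_pow]
    rw [show (Nat.card ↥H : ℝ) / (Fintype.card G : ℝ) *
      ((Fintype.card G : ℝ) / (Nat.card ↥H : ℝ)) = 1 by field_simp]
    exact one_pow k
  -- rewrite the state
  have hcsH : cosetState H = (((Nat.card ↥H : ℝ) / (Fintype.card G : ℝ) : ℝ) : ℂ) • P H := by
    rw [hPdef H, smul_smul]
    rw [show (((Nat.card ↥H : ℝ) / (Fintype.card G : ℝ) : ℝ) : ℂ) *
      ((Fintype.card G : ℂ) / (Nat.card ↥H : ℂ)) = 1 by push_cast; field_simp]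
    rw [one_smul]
  have hρ : tensorPow (cosetState H) k = ((e : ℝ) : ℂ) • S := by
    rw [hcsH, tensorPow_smul, hSdef, he]
    rw [← Complex.ofReal_pow]
  have hLHS : (((1 - R * S * R) * tensorPow (cosetState H) k).trace).re = e * (dd - x) := by
    rw [hρ]
    rw [Matrix.mul_smul]
    rw [Matrix.trace_smul]
    rw [smul_eq_mul]
    rw [Complex.re_ofReal_mul]
    congr 1
    rw [Matrix.sub_mul, Matrix.one_mul, Matrix.trace_sub, Complex.sub_re, hdd, hx]
  -- the sum identity
  have hterm : ∀ K ∈ 𝓗.erase H, e * ((tensorPow (P K) k) * S).trace.re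
      = ((Nat.card ↥(H ⊓ K) : ℝ) / (Nat.card ↥K : ℝ)) ^ k := by
    intro K _
    have h1 : (tensorPow (P K) k) * S = tensorPow (P K * P H) k := by
      rw [hSdef, ← tensorPow_mul]
    have h2 : (P K * P H).trace = ((((Fintype.card G : ℝ) * (Nat.card ↥(H ⊓ K) : ℝ) /
        ((Nat.card ↥K : ℝ) * (Nat.card ↥H : ℝ))) : ℝ) : ℂ) := by
      rw [hPdef, hPdef, Matrix.smul_mul, Matrix.mul_smul, smul_smul, Matrix.trace_smul,
        trace_cosetState_mul, smul_eq_mul]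
      rw [show K ⊓ H = H ⊓ K from inf_comm K H]
      push_cast
      field_simp
    rw [h1, tensorPow_trace, h2, ← Complex.ofReal_pow, Complex.ofReal_re, he, ← mul_pow]
    congr 1
    field_simp
  have hsum : e * t' = ∑ K ∈ 𝓗.erase H, ((Nat.card ↥(H ⊓ K) : ℝ) / (Nat.card ↥K : ℝ)) ^ k := by
    rw [ht', hTdef, Finset.sum_mul, Matrix.trace_sum, Complex.re_sum, Finset.mul_sum]
    exact Finset.sum_congr rfl hterm
  have hSnn : 0 ≤ ∑ K ∈ 𝓗.erase H, ((Nat.card ↥(H ⊓ K) : ℝ) / (Nat.card ↥K : ℝ)) ^ k := by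
    refine Finset.sum_nonneg fun K _ => ?_
    positivity
  -- final arithmetic
  rw [hLHS, ← hsum]
  have h1 : e * e * (y * y) ≤ e * x := by
    have h2 := mul_le_mul_of_nonneg_left hyx (mul_pos hepos hepos).le
    have h3 : e * e * (dd * x) = (e * dd) * (e * x) := by ring
    rw [h3, hedd, one_mul] at h2
    nlinarith [h2]
  nlinarith [sq_nonneg (1 - e * y), h1, mul_le_mul_of_nonneg_left htangent hepos.le,
    hedd, mul_nonneg hepos.le ht'nn]
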